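/- The entropy function 𝓔 : [0,γ*] → ℝ is continuously differentiable on [0,γ*] (with one-sided derivatives at the endpoints); in particular, 𝓔 ∈ C¹([0,γ*]). -/

import Mathlib

open Filter
open scoped Classical

noncomputable section GFFCommon

/-- Vertices of `ℤ²`. -/
abbrev Vtx : Type := ℤ × ℤ

/-- Sample space: a real-valued field indexed by the vertices of `ℤ²`. -/
abbrev FieldSp : Type := Vtx → ℝ

/-- The box `V_N = {0,1,…,N}²`. -/
def VN (N : ℕ) : Finset Vtx := Finset.Icc (0, 0) ((N : ℤ), (N : ℤ))

/-- The boundary `∂B` of a finite box `B ⊆ ℤ²`: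
vertices of `B` having a (Euclidean distance 1) neighbour outside `B`. -/
def bdry (B : Finset Vtx) : Finset Vtx :=
  B.filter fun v =>
    ¬((v.1 + 1, v.2) ∈ B ∧ (v.1 - 1, v.2) ∈ B ∧ (v.1, v.2 + 1) ∈ B ∧ (v.1, v.2 - 1) ∈ B)

/-- The interior `B° = B ∖ ∂B`. -/
def intr (B : Finset Vtx) : Finset Vtx := B \ bdry B

/-- The neighbourhood `[v]_λ` of `v` in `V_N`. -/
def nbhd (N : ℕ) (lam : ℝ) (v : Vtx) : Finset Vtx :=
  if lam = 0 then VN N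
  else if lam = 1 then {v}
  else (VN N).filter fun w =>
    |(w.1 : ℝ) - (v.1 : ℝ)| ≤ (N : ℝ) ^ ((1 : ℝ) - lam) / 2 ∧
    |(w.2 : ℝ) - (v.2 : ℝ)| ≤ (N : ℝ) ^ ((1 : ℝ) - lam) / 2

/-- The σ-algebra `F_{∂[v]_λ ∪ [v]_λ^c}`, generated by the field variables on the
boundary of `[v]_λ` and those outside of it. -/
def scaleAlg (N : ℕ) (lam : ℝ) (v : Vtx) : MeasurableSpace FieldSp :=
  ⨆ w ∈ {w : Vtx | w ∈ VN N ∧ w ∉ intr (nbhd N lam v)},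
    MeasurableSpace.comap (fun ω : FieldSp => ω w) inferInstance

/-- `G` is the Green function of simple random walk killed on `∂B`, normalized by `π/2`:
it vanishes unless both arguments are in `B°`, and in `B°` it satisfies the
first-step (discrete Poisson equation) characterization
`G(x,y) = (1/4)·Σ_{x'∼x} G(x',y) + (π/2)·1_{x=y}`. -/
def IsGreenFn (B : Finset Vtx) (G : Vtx → Vtx → ℝ) : Prop :=
  (∀ x y : Vtx, x ∉ intr B ∨ y ∉ intr B → G x y = 0) ∧
  ∀ y ∈ intr B, ∀ x ∈ intr B,
    G x y = (G (x.1 + 1, x.2) y + G (x.1 - 1, x.2) y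
        + G (x.1, x.2 + 1) y + G (x.1, x.2 - 1) y) / 4
      + (Real.pi / 2) * (if x = y then 1 else 0)

/-- `P` is the law (on the canonical space `FieldSp`) of the Gaussian free field on `V_N`:
a centered Gaussian field with covariance the Green function `G_{V_N}`. -/
def IsGFF (N : ℕ) (P : MeasureTheory.Measure FieldSp) : Prop :=
  MeasureTheory.IsProbabilityMeasure P ∧
  ∃ G : Vtx → Vtx → ℝ, IsGreenFn (VN N) G ∧
    ∀ c : Vtx → ℝ,
      P.map (fun ω => ∑ v ∈ VN N, c v * ω v) =
        ProbabilityTheory.gaussianReal 0 (Real.toNNReal (∑ v ∈ VN N, ∑ w ∈ VN N, c v * c w * G v w))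

open MeasureTheory in
/-- `φ_v(λ) = E[φ_v | F_{∂[v]_λ ∪ [v]_λ^c}]`. -/
def phiScale (N : ℕ) (P : MeasureTheory.Measure FieldSp) (v : Vtx) (lam : ℝ) : FieldSp → ℝ :=
  P[fun ω : FieldSp => ω v | scaleAlg N lam v]

/-- Admissible parameters `(σ,λ)`: `σ_1,…,σ_M > 0` and `0 = λ_0 < λ_1 < … < λ_M = 1`. -/
def ScaleParams (M : ℕ) (sigv lamv : ℕ → ℝ) : Prop :=
  1 ≤ M ∧ (∀ i ∈ Finset.Icc 1 M, 0 < sigv i) ∧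
  lamv 0 = 0 ∧ lamv M = 1 ∧ ∀ i, i < M → lamv i < lamv (i + 1)

/-- The `(σ,λ)`-GFF: `ψ_v = Σ_{i=1}^M σ_i (φ_v(λ_i) − φ_v(λ_{i−1}))`. -/
def psiFld (N M : ℕ) (sigv lamv : ℕ → ℝ) (P : MeasureTheory.Measure FieldSp) (v : Vtx) : FieldSp → ℝ :=
  fun ω => ∑ i ∈ Finset.Icc 1 M, sigv i * (phiScale N P v (lamv i) ω - phiScale N P v (lamv (i - 1)) ω)

open MeasureTheory in
/-- `ψ_v(λ) = E[ψ_v | F_{∂[v]_λ ∪ [v]_λ^c}]`. -/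
def psiScale (N M : ℕ) (sigv lamv : ℕ → ℝ) (P : MeasureTheory.Measure FieldSp) (v : Vtx) (lam : ℝ) :
    FieldSp → ℝ :=
  P[psiFld N M sigv lamv P v | scaleAlg N lam v]

/-- The increment `ψ_v(λ,λ') = ψ_v(λ') − ψ_v(λ)`. -/
def psiInc (N M : ℕ) (sigv lamv : ℕ → ℝ) (P : MeasureTheory.Measure FieldSp) (v : Vtx) (lam lam' : ℝ) :
    FieldSp → ℝ :=
  fun ω => psiScale N M sigv lamv P v lam' ω - psiScale N M sigv lamv P v lam ω

/-- The step function `σ(s) = σ_1 1_{{0}}(s) + Σ_{i=1}^M σ_i 1_{(λ_{i−1},λ_i]}(s)`. -/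
def stepFn (M : ℕ) (sigv lamv : ℕ → ℝ) (s : ℝ) : ℝ :=
  (if s = 0 then sigv 1 else 0) +
  ∑ i ∈ Finset.Icc 1 M, if lamv (i - 1) < s ∧ s ≤ lamv i then sigv i else 0

/-- `𝒥_f(s) = ∫_0^s f(r) dr`. -/
def Jint (f : ℝ → ℝ) (s : ℝ) : ℝ := ∫ r in (0:ℝ)..s, f r

/-- `𝒥_f(s₁,s₂) = ∫_{s₁}^{s₂} f(r) dr`. -/
def Jint2 (f : ℝ → ℝ) (s₁ s₂ : ℝ) : ℝ := ∫ r in s₁..s₂, f r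

/-- The speed function `𝒥_{σ²}`. -/
def Jsig2 (M : ℕ) (sigv lamv : ℕ → ℝ) (s : ℝ) : ℝ := Jint (fun r => (stepFn M sigv lamv r) ^ 2) s

/-- The normalized speed function `𝒥̄_{σ²} = 𝒥_{σ²}/𝒥_{σ²}(1)`. -/
def JsigBar (M : ℕ) (sigv lamv : ℕ → ℝ) (s : ℝ) : ℝ := Jsig2 M sigv lamv s / Jsig2 M sigv lamv 1

/-- The concave hull on `[0,1]` of a function `f`, i.e. the pointwise infimum over all
concave functions dominating `f` on `[0,1]`. -/
def concaveHull (f : ℝ → ℝ) (s : ℝ) : ℝ :=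
  sInf {y | ∃ g : ℝ → ℝ, ConcaveOn ℝ (Set.Icc (0:ℝ) 1) g ∧
    (∀ t ∈ Set.Icc (0:ℝ) 1, f t ≤ g t) ∧ y = g s}

/-- The effective parameters: jump scales `0 = λ⁰ < … < λ^m = 1`, values
`σ̄_1 > … > σ̄_m > 0`, and the left-continuous non-increasing step function `σ̄`
such that `∫_0^s σ̄²` is the concavification of `𝒥_{σ²}`. -/
def EffParams (M : ℕ) (sigv lamv : ℕ → ℝ) (m : ℕ) (sigb lamb : ℕ → ℝ) (sigbar : ℝ → ℝ) : Prop :=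
  1 ≤ m ∧ m ≤ M ∧ lamb 0 = 0 ∧ lamb m = 1 ∧ (∀ j, j < m → lamb j < lamb (j + 1)) ∧
  (∀ l, 1 ≤ l → l < m → sigb (l + 1) < sigb l) ∧ (∀ l ∈ Finset.Icc 1 m, 0 < sigb l) ∧
  sigbar 0 = sigb 1 ∧
  (∀ l ∈ Finset.Icc 1 m, ∀ s : ℝ, lamb (l - 1) < s → s ≤ lamb l → sigbar s = sigb l) ∧
  (∀ s : ℝ, 0 < s → s ≤ 1 →
    concaveHull (Jsig2 M sigv lamv) s = ∫ r in (0:ℝ)..s, (sigbar r) ^ 2)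

/-- `γ* = 𝒥_{σ²/σ̄}(1)`. -/
def gammaStar (M : ℕ) (sigv lamv : ℕ → ℝ) (sigbar : ℝ → ℝ) : ℝ :=
  ∫ s in (0:ℝ)..1, (stepFn M sigv lamv s) ^ 2 / sigbar s

/-- The critical levels `γ^l = ∫_0^1 σ²(s)/σ̄(s ∧ λ^l) ds`, `γ⁰ = 0`. -/
def gammaL (M : ℕ) (sigv lamv : ℕ → ℝ) (lamb : ℕ → ℝ) (sigbar : ℝ → ℝ) (l : ℕ) : ℝ :=
  if l = 0 then 0 else ∫ s in (0:ℝ)..1, (stepFn M sigv lamv s) ^ 2 / sigbar (min s (lamb l))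

/-- `EntE` is the entropy function `𝓔` of the model. -/
def IsEntropy (M : ℕ) (sigv lamv : ℕ → ℝ) (m : ℕ) (lamb : ℕ → ℝ) (sigbar : ℝ → ℝ)
    (EntE : ℝ → ℝ) : Prop :=
  EntE 0 = 1 ∧
  ∀ l ∈ Finset.Icc 1 m, ∀ γ : ℝ,
    gammaL M sigv lamv lamb sigbar (l - 1) < γ → γ ≤ gammaL M sigv lamv lamb sigbar l →
      EntE γ = (1 - lamb (l - 1)) -
        (γ - ∫ s in (0:ℝ)..(lamb (l - 1)), (stepFn M sigv lamv s) ^ 2 / sigbar s) ^ 2 /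
          Jint2 (fun r => (stepFn M sigv lamv r) ^ 2) (lamb (l - 1)) 1

/-- The limiting free energy of the `REM(σ)` model. -/
def fREM (σ β : ℝ) : ℝ :=
  if (2 / σ) < β then 2 * (β / (2 / σ)) else 1 + (β / (2 / σ)) ^ 2

/-- The index `l_β`. -/
def lbeta (m : ℕ) (sigb : ℕ → ℝ) (β : ℝ) : ℕ :=
  if β ≤ 2 / sigb m then sInf {l : ℕ | 1 ≤ l ∧ β ≤ 2 / sigb l} else m + 1

/-- The limiting free energy `f^ψ(β)`, written with the `l_β` split. -/
def fpsiLim (m : ℕ) (sigb lamb : ℕ → ℝ) (β : ℝ) : ℝ :=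
  (∑ j ∈ Finset.Icc 1 (lbeta m sigb β - 1), (2 * β / (2 / sigb j)) * (lamb j - lamb (j - 1))) +
  ∑ j ∈ Finset.Icc (lbeta m sigb β) m, (1 + β ^ 2 / (2 / sigb j) ^ 2) * (lamb j - lamb (j - 1))

/-- The set `ℬ` of non-critical inverse temperatures. -/
def critSet (m : ℕ) (sigb : ℕ → ℝ) : Set ℝ :=
  {β | 0 < β ∧ ∀ j ∈ Finset.Icc 1 m, β ≠ 2 / sigb j}

/-- The partition function `Z_N^ψ(β)`. -/
def ZN (N M : ℕ) (sigv lamv : ℕ → ℝ) (P : MeasureTheory.Measure FieldSp) (β : ℝ) (ω : FieldSp) : ℝ :=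
  ∑ v ∈ VN N, Real.exp (β * psiFld N M sigv lamv P v ω)

/-- The free energy `f_N^ψ(β)` on `V_N`. -/
def freeEnergy (N M : ℕ) (sigv lamv : ℕ → ℝ) (P : MeasureTheory.Measure FieldSp) (β : ℝ) (ω : FieldSp) : ℝ :=
  (Real.log ((N : ℝ) ^ 2))⁻¹ * Real.log (ZN N M sigv lamv P β ω)

/-- The set `A_{N,ρ}` of points at distance at least `N^{1−ρ}` from `ℤ² ∖ V_N`. -/
def AN (N : ℕ) (ρ : ℝ) : Finset Vtx :=
  (VN N).filter fun v => ∀ z : Vtx, z ∉ VN N →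
    (N : ℝ) ^ ((1 : ℝ) - ρ) ≤ Real.sqrt (((v.1 : ℝ) - (z.1 : ℝ)) ^ 2 + ((v.2 : ℝ) - (z.2 : ℝ)) ^ 2)

/-- The restricted partition function `Z_{N,ρ}^ψ(β)`. -/
def ZNres (N M : ℕ) (sigv lamv : ℕ → ℝ) (P : MeasureTheory.Measure FieldSp) (β ρ : ℝ) (ω : FieldSp) : ℝ :=
  ∑ v ∈ AN N ρ, Real.exp (β * psiFld N M sigv lamv P v ω)

/-- The free energy `f_{N,ρ}^ψ(β)` on `A_{N,ρ}`. -/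
def freeEnergyRes (N M : ℕ) (sigv lamv : ℕ → ℝ) (P : MeasureTheory.Measure FieldSp) (β ρ : ℝ)
    (ω : FieldSp) : ℝ :=
  (Real.log ((N : ℝ) ^ 2))⁻¹ * Real.log (ZNres N M sigv lamv P β ρ ω)

/-- The Gibbs weight `𝒢_{β,N}({v})`. -/
def gibbsW (N M : ℕ) (sigv lamv : ℕ → ℝ) (P : MeasureTheory.Measure FieldSp) (β : ℝ) (v : Vtx)
    (ω : FieldSp) : ℝ :=
  Real.exp (β * psiFld N M sigv lamv P v ω) / ZN N M sigv lamv P β ω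

/-- The restricted Gibbs weight `𝒢_{β,N,ρ}({v})`. -/
def gibbsWres (N M : ℕ) (sigv lamv : ℕ → ℝ) (P : MeasureTheory.Measure FieldSp) (β ρ : ℝ) (v : Vtx)
    (ω : FieldSp) : ℝ :=
  Real.exp (β * psiFld N M sigv lamv P v ω) / ZNres N M sigv lamv P β ρ ω

/-- `E𝒢_{β,N}^{×s}[F]`: the mean over the disorder of the `s`-fold Gibbs average of `F`. -/
def gibbsExp (N M : ℕ) (sigv lamv : ℕ → ℝ) (P : MeasureTheory.Measure FieldSp) (β : ℝ) (s : ℕ)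
    (F : (Fin s → Vtx) → ℝ) : ℝ :=
  ∫ ω, (∑ vv ∈ Fintype.piFinset (fun _ : Fin s => VN N),
    (∏ i, gibbsW N M sigv lamv P β (vv i) ω) * F vv) ∂P

/-- `E𝒢_{β,N,ρ}^{×s}[F]`, with an `ω`-dependent integrand allowed. -/
def gibbsExpRes (N M : ℕ) (sigv lamv : ℕ → ℝ) (P : MeasureTheory.Measure FieldSp) (β ρ : ℝ) (s : ℕ)
    (F : (Fin s → Vtx) → FieldSp → ℝ) : ℝ :=
  ∫ ω, (∑ vv ∈ Fintype.piFinset (fun _ : Fin s => AN N ρ),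
    (∏ i, gibbsWres N M sigv lamv P β ρ (vv i) ω) * F vv ω) ∂P

/-- `E𝒢_{β,N}^{×s}[F]`, with an `ω`-dependent integrand allowed. -/
def gibbsExpW (N M : ℕ) (sigv lamv : ℕ → ℝ) (P : MeasureTheory.Measure FieldSp) (β : ℝ) (s : ℕ)
    (F : (Fin s → Vtx) → FieldSp → ℝ) : ℝ :=
  ∫ ω, (∑ vv ∈ Fintype.piFinset (fun _ : Fin s => VN N),
    (∏ i, gibbsW N M sigv lamv P β (vv i) ω) * F vv ω) ∂P

/-- The covariance `E[ψ_v ψ_{v'}]`. -/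
def psiCov (N M : ℕ) (sigv lamv : ℕ → ℝ) (P : MeasureTheory.Measure FieldSp) (v v' : Vtx) : ℝ :=
  ∫ ω, psiFld N M sigv lamv P v ω * psiFld N M sigv lamv P v' ω ∂P

/-- `C₀` is a constant witnessing the uniform variance upper bound
`max_{v∈V_N} E[ψ_v²] ≤ 𝒥_{σ²}(1) log N + C₀` for `N` large. -/
def IsVarBound (M : ℕ) (sigv lamv : ℕ → ℝ) (P : ℕ → MeasureTheory.Measure FieldSp) (C₀ : ℝ) : Prop :=
  0 < C₀ ∧ ∃ N₀ : ℕ, ∀ N ≥ N₀, ∀ v ∈ VN N,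
    psiCov N M sigv lamv (P N) v v ≤ Jsig2 M sigv lamv 1 * Real.log N + C₀

/-- The overlap `q^N(v,v')`. -/
def overlapQ (N M : ℕ) (sigv lamv : ℕ → ℝ) (P : MeasureTheory.Measure FieldSp) (C₀ : ℝ) (v v' : Vtx) : ℝ :=
  psiCov N M sigv lamv P v v' / (Jsig2 M sigv lamv 1 * Real.log N + C₀)

/-- Convergence in probability to a constant, for a sequence of random variables on a
sequence of probability spaces. -/
def TendstoInProb (P : ℕ → MeasureTheory.Measure FieldSp) (X : ℕ → FieldSp → ℝ) (c : ℝ) : Prop :=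
  ∀ ε : ℝ, 0 < ε → Tendsto (fun N => P N {ω | ε < |X N ω - c|}) atTop (nhds 0)

/-- Convergence in `L^p` to a constant. -/
def TendstoLp (P : ℕ → MeasureTheory.Measure FieldSp) (X : ℕ → FieldSp → ℝ) (p c : ℝ) : Prop :=
  Tendsto (fun N => ∫ ω, |X N ω - c| ^ p ∂(P N)) atTop (nhds 0)

/-- The branching scale `b_N(v,v')`. -/
def bScale (N : ℕ) (v v' : Vtx) : ℝ :=
  sSup {lam : ℝ | lam ∈ Set.Icc (0:ℝ) 1 ∧ ((nbhd N lam v) ∩ (nbhd N lam v')).Nonempty}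

end GFFCommon


section MyAux
open MeasureTheory Set

lemma my_mono_of_lt (K : ℕ) (lv : ℕ → ℝ) (hlt : ∀ i, i < K → lv i < lv (i+1)) :
    ∀ i j, i ≤ j → j ≤ K → lv i ≤ lv j := by
  intro i j hij hjK
  induction j with
  | zero =>
    have : i = 0 := by omega
    simp [this]
  | succ n ih =>
    rcases Nat.lt_or_ge i (n+1) with h | h
    · exact le_trans (ih (by omega) (by omega)) (le_of_lt (hlt n (by omega)))
    · have : i = n + 1 := by omega
      simp [this]

lemma my_mono_of_lt_zero (K : ℕ) (lv : ℕ → ℝ) (hlt : ∀ i, i < K → lv i < lv (i+1)) :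
    ∀ i j, i ≤ j → j ≤ K → lv i ≤ lv j := my_mono_of_lt K lv hlt

lemma my_exists_piece (K : ℕ) (lv : ℕ → ℝ) (h0 : lv 0 = 0) (hK : lv K = 1)
    (hlt : ∀ i, i < K → lv i < lv (i+1)) {s : ℝ} (hs0 : 0 < s) (hs1 : s ≤ 1) :
    ∃ i, 1 ≤ i ∧ i ≤ K ∧ lv (i-1) < s ∧ s ≤ lv i := by
  classical
  have hex : ∃ i, s ≤ lv i := ⟨K, by rw [hK]; exact hs1⟩
  set i := Nat.find hex with hi
  have hle : s ≤ lv i := Nat.find_spec hex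
  have hi1 : 1 ≤ i := by
    by_contra h
    have h0' : i = 0 := by omega
    rw [h0', h0] at hle; linarith
  have hiK : i ≤ K := by
    by_contra h
    have := Nat.find_min hex (show K < i by omega)
    rw [hK] at this; exact this hs1
  have hprev : ¬ s ≤ lv (i-1) := Nat.find_min hex (by omega)
  exact ⟨i, hi1, hiK, lt_of_not_ge hprev, hle⟩

lemma my_sum_ite_piece (K : ℕ) (lv : ℕ → ℝ) (c : ℕ → ℝ)
    (hmono : ∀ i j, i ≤ j → j ≤ K → lv i ≤ lv j)
    {s : ℝ} {i : ℕ} (hi1 : 1 ≤ i) (hiK : i ≤ K) (h1 : lv (i-1) < s) (h2 : s ≤ lv i) :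
    (∑ k ∈ Finset.Icc 1 K, if lv (k-1) < s ∧ s ≤ lv k then c k else 0) = c i := by
  rw [Finset.sum_eq_single_of_mem i (Finset.mem_Icc.mpr ⟨hi1, hiK⟩)]
  · rw [if_pos ⟨h1, h2⟩]
  · intro k hk hne
    rw [Finset.mem_Icc] at hk
    rcases Nat.lt_or_ge k i with h | h
    · have hkk : lv k ≤ lv (i-1) := hmono k (i-1) (by omega) (by omega)
      exact if_neg (fun hc => absurd hc.2 (not_le.mpr (lt_of_le_of_lt hkk h1)))
    · have hki : i < k := by omega
      have hkk : lv i ≤ lv (k-1) := hmono i (k-1) (by omega) (by omega)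
      exact if_neg (fun hc => absurd hc.1 (not_lt.mpr (le_trans h2 hkk)))

lemma my_intervalIntegrable_of_bdd {u : ℝ → ℝ} (hm : Measurable u) {C : ℝ}
    (hC : ∀ s, |u s| ≤ C) (a b : ℝ) : IntervalIntegrable u volume a b := by
  rw [intervalIntegrable_iff]
  apply Measure.integrableOn_of_bounded (M := C)
  · exact measure_Ioc_lt_top.ne
  · exact hm.aestronglyMeasurable
  · exact ae_of_all _ (fun x => by simpa using hC x)

lemma my_integral_step {u : ℝ → ℝ} {c p q : ℝ} (hpq : p ≤ q)
    (h : ∀ s, p < s → s ≤ q → u s = c) : ∫ s in p..q, u s = c * (q - p) := by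
  rw [intervalIntegral.integral_congr_ae (g := fun _ => c)
    (ae_of_all _ (fun x hx => by
      rw [Set.uIoc_of_le hpq] at hx
      exact h x hx.1 hx.2))]
  simp [smul_eq_mul, mul_comm]

lemma my_intInt_congr_Ioc {u v : ℝ → ℝ} {p q : ℝ} (hpq : p ≤ q)
    (hint : IntervalIntegrable v volume p q)
    (h : ∀ s, p < s → s ≤ q → u s = v s) : IntervalIntegrable u volume p q := by
  rw [intervalIntegrable_iff_integrableOn_Ioc_of_le hpq] at *
  exact hint.congr_fun (fun s hs => (h s hs.1 hs.2).symm) measurableSet_Ioc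

lemma my_integral_congr_Ioc {u v : ℝ → ℝ} {p q : ℝ} (hpq : p ≤ q)
    (h : ∀ s, p < s → s ≤ q → u s = v s) :
    ∫ s in p..q, u s = ∫ s in p..q, v s := by
  apply intervalIntegral.integral_congr_ae
  apply ae_of_all
  intro x hx
  rw [Set.uIoc_of_le hpq] at hx
  exact h x hx.1 hx.2

lemma my_integral_le_const {u : ℝ → ℝ} {c p q : ℝ} (hpq : p ≤ q)
    (hint : IntervalIntegrable u volume p q)
    (h : ∀ s, p < s → s ≤ q → u s ≤ c) : ∫ s in p..q, u s ≤ c * (q - p) := by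
  rw [intervalIntegral.integral_of_le hpq]
  have h1 : ∫ s in Set.Ioc p q, u s ≤ ∫ _ in Set.Ioc p q, c := by
    apply setIntegral_mono_on
    · exact (intervalIntegrable_iff_integrableOn_Ioc_of_le hpq).1 hint
    · exact integrableOn_const measure_Ioc_lt_top.ne
    · exact measurableSet_Ioc
    · exact fun x hx => h x hx.1 hx.2
  calc ∫ s in Set.Ioc p q, u s ≤ ∫ _ in Set.Ioc p q, c := h1
    _ = c * (q - p) := by
        rw [setIntegral_const, measureReal_def, Real.volume_Ioc, smul_eq_mul,
          ENNReal.toReal_ofReal (by linarith), mul_comm]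

lemma my_integral_ge_const {u : ℝ → ℝ} {c p q : ℝ} (hpq : p ≤ q)
    (hint : IntervalIntegrable u volume p q)
    (h : ∀ s, p < s → s ≤ q → c ≤ u s) : c * (q - p) ≤ ∫ s in p..q, u s := by
  have := my_integral_le_const (u := fun s => -u s) (c := -c) hpq hint.neg
    (fun s h1 h2 => neg_le_neg (h s h1 h2))
  rw [intervalIntegral.integral_neg] at this
  linarith

lemma my_concaveOn_affine (c k : ℝ) : ConcaveOn ℝ (Set.Icc (0:ℝ) 1) (fun s => c + k * s) := by
  refine ⟨convex_Icc _ _, ?_⟩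
  intro x _ y _ a b ha hb hab
  simp only [smul_eq_mul]
  apply le_of_eq
  linear_combination c * hab

lemma my_concaveOn_min {s : Set ℝ} {f g : ℝ → ℝ} (hf : ConcaveOn ℝ s f) (hg : ConcaveOn ℝ s g) :
    ConcaveOn ℝ s (fun x => min (f x) (g x)) := hf.inf hg

lemma my_glue_deriv (f D : ℝ → ℝ) (pts : ℕ → ℝ) :
    ∀ n : ℕ, 1 ≤ n → (∀ i, i < n → pts i < pts (i+1)) →
    (∀ l, l < n → ∀ x ∈ Set.Icc (pts l) (pts (l+1)),
      HasDerivWithinAt f (D x) (Set.Icc (pts l) (pts (l+1))) x) →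
    ∀ x ∈ Set.Icc (pts 0) (pts n), HasDerivWithinAt f (D x) (Set.Icc (pts 0) (pts n)) x := by
  intro n
  induction n with
  | zero => omega
  | succ n ih =>
    intro _ hmono hpiece x hx
    rcases Nat.eq_zero_or_pos n with rfl | hn1
    · exact hpiece 0 (by omega) x hx
    · have h0n : pts 0 ≤ pts n :=
        my_mono_of_lt (n+1) pts hmono 0 n (Nat.zero_le _) (by omega)
      have hnn1 : pts n ≤ pts (n+1) := le_of_lt (hmono n (by omega))
      have hunion : Set.Icc (pts 0) (pts n) ∪ Set.Icc (pts n) (pts (n+1))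
          = Set.Icc (pts 0) (pts (n+1)) := Set.Icc_union_Icc_eq_Icc h0n hnn1
      have hL : HasDerivWithinAt f (D x) (Set.Icc (pts 0) (pts n)) x := by
        by_cases hxm : x ∈ Set.Icc (pts 0) (pts n)
        · exact ih hn1 (fun i hi => hmono i (by omega)) (fun l hl => hpiece l (by omega)) x hxm
        · exact HasFDerivWithinAt.of_notMem_closure (by rwa [IsClosed.closure_eq isClosed_Icc])
      have hR : HasDerivWithinAt f (D x) (Set.Icc (pts n) (pts (n+1))) x := by
        by_cases hxm : x ∈ Set.Icc (pts n) (pts (n+1))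
        · exact hpiece n (by omega) x hxm
        · exact HasFDerivWithinAt.of_notMem_closure (by rwa [IsClosed.closure_eq isClosed_Icc])
      rw [← hunion]
      exact hL.union hR

lemma my_glue_cont (f : ℝ → ℝ) (pts : ℕ → ℝ) :
    ∀ n : ℕ, 1 ≤ n → (∀ i, i < n → pts i < pts (i+1)) →
    (∀ l, l < n → ∀ x ∈ Set.Icc (pts l) (pts (l+1)),
      ContinuousWithinAt f (Set.Icc (pts l) (pts (l+1))) x) →
    ∀ x ∈ Set.Icc (pts 0) (pts n), ContinuousWithinAt f (Set.Icc (pts 0) (pts n)) x := by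
  intro n
  induction n with
  | zero => omega
  | succ n ih =>
    intro _ hmono hpiece x hx
    rcases Nat.eq_zero_or_pos n with rfl | hn1
    · exact hpiece 0 (by omega) x hx
    · have h0n : pts 0 ≤ pts n :=
        my_mono_of_lt (n+1) pts hmono 0 n (Nat.zero_le _) (by omega)
      have hnn1 : pts n ≤ pts (n+1) := le_of_lt (hmono n (by omega))
      have hunion : Set.Icc (pts 0) (pts n) ∪ Set.Icc (pts n) (pts (n+1))
          = Set.Icc (pts 0) (pts (n+1)) := Set.Icc_union_Icc_eq_Icc h0n hnn1
      have hL : ContinuousWithinAt f (Set.Icc (pts 0) (pts n)) x := by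
        by_cases hxm : x ∈ Set.Icc (pts 0) (pts n)
        · exact ih hn1 (fun i hi => hmono i (by omega)) (fun l hl => hpiece l (by omega)) x hxm
        · exact continuousWithinAt_of_notMem_closure
            (by rwa [IsClosed.closure_eq isClosed_Icc])
      have hR : ContinuousWithinAt f (Set.Icc (pts n) (pts (n+1))) x := by
        by_cases hxm : x ∈ Set.Icc (pts n) (pts (n+1))
        · exact hpiece n (by omega) x hxm
        · exact continuousWithinAt_of_notMem_closure
            (by rwa [IsClosed.closure_eq isClosed_Icc])
      rw [← hunion]
      exact hL.union hR

end MyAux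

open MeasureTheory


/-- **Lemma (The entropy function is `C¹`).**
The function `𝓔 : [0,γ*] → ℝ` is continuously differentiable on `[0,γ*]` (with one-sided
derivatives at the endpoints). -/
theorem entropy_function_C1
    (M : ℕ) (sigv lamv : ℕ → ℝ) (hparams : ScaleParams M sigv lamv)
    (m : ℕ) (sigb lamb : ℕ → ℝ) (sigbar : ℝ → ℝ)
    (heff : EffParams M sigv lamv m sigb lamb sigbar)
    (EntE : ℝ → ℝ) (hent : IsEntropy M sigv lamv m lamb sigbar EntE) :
    ∃ E' : ℝ → ℝ,
      (∀ γ ∈ Set.Icc 0 (gammaStar M sigv lamv sigbar),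
        HasDerivWithinAt EntE (E' γ) (Set.Icc 0 (gammaStar M sigv lamv sigbar)) γ) ∧
      ContinuousOn E' (Set.Icc 0 (gammaStar M sigv lamv sigbar)) := by
  classical
  obtain ⟨hM1, hsigpos, hlv0, hlvM, hlvlt⟩ := hparams
  obtain ⟨hm1, hmM, hb0, hbm, hblt, hbdec, hbpos, hsig0, hsigval, hhull⟩ := heff
  obtain ⟨hE0, hEform⟩ := hent
  have hlvmono := my_mono_of_lt M lamv hlvlt
  have hbmono := my_mono_of_lt m lamb hblt
  have hlvb0 : ∀ j, j ≤ m → (0:ℝ) ≤ lamb j := by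
    intro j hj
    have := hbmono 0 j (Nat.zero_le _) hj
    rwa [hb0] at this
  have hlvb1 : ∀ j, j ≤ m → lamb j ≤ 1 := by
    intro j hj
    have := hbmono j m hj le_rfl
    rwa [hbm] at this
  have hbposl : ∀ l, 1 ≤ l → l ≤ m → 0 < sigb l := fun l h1 h2 =>
    hbpos l (Finset.mem_Icc.mpr ⟨h1, h2⟩)
  have hbanti : ∀ i j, 1 ≤ i → i ≤ j → j ≤ m → sigb j ≤ sigb i := by
    intro i j hi hij hjm
    induction j with
    | zero => omega
    | succ n ih =>
      rcases Nat.lt_or_ge i (n+1) with h | h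
      · exact le_trans (le_of_lt (hbdec n (by omega) (by omega))) (ih (by omega) (by omega))
      · have hin : i = n + 1 := by omega
        simp [hin]
  have hbltl : ∀ k, k < m → lamb k < lamb (k+1) := hblt
  -- step function facts
  have hstep_val : ∀ i, 1 ≤ i → i ≤ M → ∀ s : ℝ, lamv (i-1) < s → s ≤ lamv i →
      stepFn M sigv lamv s = sigv i := by
    intro i h1 hM s hs1 hs2
    have h0i : (0:ℝ) ≤ lamv (i-1) := by
      have := hlvmono 0 (i-1) (Nat.zero_le _) (by omega)
      rwa [hlv0] at this
    have hs0 : (0:ℝ) < s := lt_of_le_of_lt h0i hs1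
    unfold stepFn
    rw [if_neg (ne_of_gt hs0), my_sum_ite_piece M lamv sigv hlvmono h1 hM hs1 hs2, zero_add]
  have hstep_cases : ∀ s : ℝ,
      stepFn M sigv lamv s = 0 ∨ ∃ i, 1 ≤ i ∧ i ≤ M ∧ stepFn M sigv lamv s = sigv i := by
    intro s
    have h0le : ∀ i ∈ Finset.Icc 1 M, (0:ℝ) ≤ lamv (i-1) := by
      intro i hi
      rw [Finset.mem_Icc] at hi
      have := hlvmono 0 (i-1) (Nat.zero_le _) (by omega)
      rwa [hlv0] at this
    rcases lt_trichotomy s 0 with h | h | h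
    · left
      unfold stepFn
      rw [if_neg (by linarith), Finset.sum_eq_zero, add_zero]
      intro i hi
      exact if_neg (fun hc => by linarith [h0le i hi, hc.1])
    · right
      refine ⟨1, le_rfl, hM1, ?_⟩
      subst h
      unfold stepFn
      rw [if_pos rfl, Finset.sum_eq_zero, add_zero]
      intro i hi
      exact if_neg (fun hc => by linarith [h0le i hi, hc.1])
    · rcases le_or_gt s 1 with h1 | h1
      · obtain ⟨i, hi1, hiM, hp1, hp2⟩ := my_exists_piece M lamv hlv0 hlvM hlvlt h h1
        exact Or.inr ⟨i, hi1, hiM, hstep_val i hi1 hiM s hp1 hp2⟩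
      · left
        unfold stepFn
        rw [if_neg (by linarith), Finset.sum_eq_zero, add_zero]
        intro i hi
        rw [Finset.mem_Icc] at hi
        have : lamv i ≤ 1 := by
          have := hlvmono i M hi.2 le_rfl
          rwa [hlvM] at this
        exact if_neg (fun hc => by linarith [hc.2])
  have hIccne : (Finset.Icc 1 M).Nonempty := ⟨1, Finset.mem_Icc.mpr ⟨le_rfl, hM1⟩⟩
  obtain ⟨smin, hsmindef⟩ : ∃ x, x = (Finset.Icc 1 M).inf' hIccne sigv := ⟨_, rfl⟩
  obtain ⟨smax, hsmaxdef⟩ : ∃ x, x = (Finset.Icc 1 M).sup' hIccne sigv := ⟨_, rfl⟩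
  have hsmin_pos : 0 < smin := by
    rw [hsmindef, Finset.lt_inf'_iff]
    exact fun i hi => hsigpos i hi
  have hsmax_pos : 0 < smax := by
    have h1 : smin ≤ sigv 1 := hsmindef ▸ Finset.inf'_le sigv (Finset.mem_Icc.mpr ⟨le_rfl, hM1⟩)
    have h2 : sigv 1 ≤ smax := hsmaxdef ▸ Finset.le_sup' sigv (Finset.mem_Icc.mpr ⟨le_rfl, hM1⟩)
    linarith
  have hstep_nonneg : ∀ s, 0 ≤ stepFn M sigv lamv s := by
    intro s
    rcases hstep_cases s with h | ⟨i, h1, h2, h⟩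
    · rw [h]
    · rw [h]; exact (hsigpos i (Finset.mem_Icc.mpr ⟨h1, h2⟩)).le
  have hstep_le : ∀ s, stepFn M sigv lamv s ≤ smax := by
    intro s
    rcases hstep_cases s with h | ⟨i, h1, h2, h⟩
    · rw [h]; exact hsmax_pos.le
    · rw [h]; exact hsmaxdef ▸ Finset.le_sup' sigv (Finset.mem_Icc.mpr ⟨h1, h2⟩)
  have hF_nonneg : ∀ s : ℝ, 0 ≤ (stepFn M sigv lamv s)^2 := fun s => sq_nonneg _
  have hF_le : ∀ s : ℝ, (stepFn M sigv lamv s)^2 ≤ smax^2 := fun s =>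
    pow_le_pow_left₀ (hstep_nonneg s) (hstep_le s) 2
  have hF_lb : ∀ s : ℝ, 0 < s → s ≤ 1 → smin^2 ≤ (stepFn M sigv lamv s)^2 := by
    intro s h0 h1
    obtain ⟨i, hi1, hiM, hp1, hp2⟩ := my_exists_piece M lamv hlv0 hlvM hlvlt h0 h1
    rw [hstep_val i hi1 hiM s hp1 hp2]
    exact pow_le_pow_left₀ hsmin_pos.le
      (hsmindef ▸ Finset.inf'_le sigv (Finset.mem_Icc.mpr ⟨hi1, hiM⟩)) 2
  have hF_abs : ∀ s : ℝ, |(stepFn M sigv lamv s)^2| ≤ smax^2 := fun s => by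
    rw [abs_of_nonneg (hF_nonneg s)]; exact hF_le s
  have hstep_meas : Measurable (stepFn M sigv lamv) := by
    unfold stepFn
    apply Measurable.add
    · apply Measurable.ite _ measurable_const measurable_const
      rw [Set.setOf_eq_eq_singleton]
      exact measurableSet_singleton 0
    · apply Finset.measurable_sum
      intro i _
      apply Measurable.ite _ measurable_const measurable_const
      show MeasurableSet {s : ℝ | lamv (i-1) < s ∧ s ≤ lamv i}
      exact measurableSet_Ioc
  have hF_meas : Measurable (fun s => (stepFn M sigv lamv s)^2) :=
    hstep_meas.pow_const 2
  have hF_int : ∀ a b : ℝ, IntervalIntegrable (fun s => (stepFn M sigv lamv s)^2) volume a b :=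
    my_intervalIntegrable_of_bdd hF_meas hF_abs
  -- the explicit step function for sigbar^2
  obtain ⟨Gg, hGgdef⟩ : ∃ Gg : ℝ → ℝ,
      Gg = fun r => ∑ l ∈ Finset.Icc 1 m, if lamb (l-1) < r ∧ r ≤ lamb l then (sigb l)^2 else 0 :=
    ⟨_, rfl⟩
  have hGg_val : ∀ l, 1 ≤ l → l ≤ m → ∀ r : ℝ, lamb (l-1) < r → r ≤ lamb l →
      Gg r = (sigb l)^2 := by
    intro l h1 h2 r hr1 hr2
    rw [hGgdef]
    exact my_sum_ite_piece m lamb (fun l => (sigb l)^2) hbmono h1 h2 hr1 hr2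
  have hGg_meas : Measurable Gg := by
    rw [hGgdef]
    apply Finset.measurable_sum
    intro l _
    apply Measurable.ite _ measurable_const measurable_const
    show MeasurableSet {r : ℝ | lamb (l-1) < r ∧ r ≤ lamb l}
    exact measurableSet_Ioc
  have hGg_abs : ∀ r : ℝ, |Gg r| ≤ ∑ l ∈ Finset.Icc 1 m, (sigb l)^2 := by
    intro r
    rw [hGgdef]
    refine (Finset.abs_sum_le_sum_abs _ _).trans (Finset.sum_le_sum ?_)
    intro l _
    split
    · rw [abs_of_nonneg (sq_nonneg _)]
    · simp [sq_nonneg]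
  have hGg_int : ∀ a b : ℝ, IntervalIntegrable Gg volume a b :=
    my_intervalIntegrable_of_bdd hGg_meas hGg_abs
  have hsigbar2 : ∀ r : ℝ, 0 < r → r ≤ 1 → (sigbar r)^2 = Gg r := by
    intro r h0 h1
    obtain ⟨l, hl1, hlm, hp1, hp2⟩ := my_exists_piece m lamb hb0 hbm hblt h0 h1
    rw [hsigval l (Finset.mem_Icc.mpr ⟨hl1, hlm⟩) r hp1 hp2, hGg_val l hl1 hlm r hp1 hp2]
  -- integrability of F / sigbar on pieces of the effective partition
  have hg_int_piece : ∀ k, k < m →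
      IntervalIntegrable (fun s => (stepFn M sigv lamv s)^2 / sigbar s) volume (lamb k) (lamb (k+1)) := by
    intro k hk
    have hle : lamb k ≤ lamb (k+1) := (hbltl k hk).le
    apply my_intInt_congr_Ioc hle ((hF_int (lamb k) (lamb (k+1))).div_const (sigb (k+1)))
    intro s hs1 hs2
    have : sigbar s = sigb (k+1) := by
      apply hsigval (k+1) (Finset.mem_Icc.mpr ⟨by omega, by omega⟩) s _ hs2
      simpa using hs1
    rw [this]
  have hg_int0 : ∀ k, k ≤ m →
      IntervalIntegrable (fun s => (stepFn M sigv lamv s)^2 / sigbar s) volume 0 (lamb k) := by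
    intro k hk
    have := IntervalIntegrable.trans_iterate (a := fun j => lamb j) (n := k)
      (f := fun s => (stepFn M sigv lamv s)^2 / sigbar s) (μ := volume)
      (fun j hj => hg_int_piece j (by omega))
    simpa only [hb0] using this
  -- the basic quantities
  obtain ⟨P, hPdef⟩ : ∃ P : ℕ → ℝ, ∀ k,
      P k = ∫ s in lamb k..lamb (k+1), (stepFn M sigv lamv s)^2 := ⟨_, fun _ => rfl⟩
  obtain ⟨Av, hAvdef⟩ : ∃ Av : ℕ → ℝ, ∀ k,
      Av k = ∫ s in (0:ℝ)..lamb k, (stepFn M sigv lamv s)^2 / sigbar s := ⟨_, fun _ => rfl⟩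
  obtain ⟨Cv, hCvdef⟩ : ∃ Cv : ℕ → ℝ, ∀ k,
      Cv k = ∫ s in lamb k..(1:ℝ), (stepFn M sigv lamv s)^2 := ⟨_, fun _ => rfl⟩
  set γv : ℕ → ℝ := gammaL M sigv lamv lamb sigbar with hγvdef
  have hγv0 : γv 0 = 0 := by simp [hγvdef, gammaL]
  have hγvl : ∀ l : ℕ, l ≠ 0 → γv l =
      ∫ s in (0:ℝ)..1, (stepFn M sigv lamv s)^2 / sigbar (min s (lamb l)) := by
    intro l hl
    simp [hγvdef, gammaL, hl]
  -- recurrences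
  have hAv0 : Av 0 = 0 := by rw [hAvdef, hb0, intervalIntegral.integral_same]
  have hAv_rec : ∀ k, k < m → Av (k+1) = Av k + P k / sigb (k+1) := by
    intro k hk
    have hle : lamb k ≤ lamb (k+1) := (hbltl k hk).le
    have hsplit := intervalIntegral.integral_add_adjacent_intervals
      (hg_int0 k (by omega)) (hg_int_piece k hk)
      (μ := volume) (f := fun s => (stepFn M sigv lamv s)^2 / sigbar s) (a := 0)
    have hpiece : ∫ s in lamb k..lamb (k+1), (stepFn M sigv lamv s)^2 / sigbar s
        = P k / sigb (k+1) := by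
      rw [my_integral_congr_Ioc (v := fun s => (stepFn M sigv lamv s)^2 / sigb (k+1)) hle ?_]
      · rw [hPdef, ← intervalIntegral.integral_div]
      · intro s hs1 hs2
        have : sigbar s = sigb (k+1) := by
          apply hsigval (k+1) (Finset.mem_Icc.mpr ⟨by omega, by omega⟩) s _ hs2
          simpa using hs1
        rw [this]
    rw [hAvdef (k+1), hAvdef k, ← hsplit, hpiece]
  have hCv_rec : ∀ k, k < m → Cv k = P k + Cv (k+1) := by
    intro k hk
    have hsplit := intervalIntegral.integral_add_adjacent_intervals
      (hF_int (lamb k) (lamb (k+1))) (hF_int (lamb (k+1)) 1)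
    rw [hCvdef k, hCvdef (k+1), hPdef k, ← hsplit]
  have hγv_rec : ∀ k, k < m → γv (k+1) = Av (k+1) + Cv (k+1) / sigb (k+1) := by
    intro k hk
    have hle1 : (0:ℝ) ≤ lamb (k+1) := hlvb0 (k+1) (by omega)
    have hle2 : lamb (k+1) ≤ 1 := hlvb1 (k+1) (by omega)
    have hlt' : lamb k < lamb (k+1) := hbltl k hk
    have hintL : IntervalIntegrable
        (fun s => (stepFn M sigv lamv s)^2 / sigbar (min s (lamb (k+1)))) volume 0 (lamb (k+1)) := by
      apply my_intInt_congr_Ioc hle1 (hg_int0 (k+1) (by omega))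
      intro s hs1 hs2
      rw [min_eq_left hs2]
    have hintR : IntervalIntegrable
        (fun s => (stepFn M sigv lamv s)^2 / sigbar (min s (lamb (k+1)))) volume (lamb (k+1)) 1 := by
      apply my_intInt_congr_Ioc hle2 ((hF_int (lamb (k+1)) 1).div_const (sigb (k+1)))
      intro s hs1 hs2
      rw [min_eq_right hs1.le, hsigval (k+1) (Finset.mem_Icc.mpr ⟨by omega, by omega⟩) (lamb (k+1)) (by simpa using hlt') le_rfl]
    have hsplit := intervalIntegral.integral_add_adjacent_intervals hintL hintR
    have hL : ∫ s in (0:ℝ)..lamb (k+1), (stepFn M sigv lamv s)^2 / sigbar (min s (lamb (k+1)))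
        = Av (k+1) := by
      rw [hAvdef (k+1)]
      apply my_integral_congr_Ioc hle1
      intro s hs1 hs2
      rw [min_eq_left hs2]
    have hR : ∫ s in lamb (k+1)..(1:ℝ), (stepFn M sigv lamv s)^2 / sigbar (min s (lamb (k+1)))
        = Cv (k+1) / sigb (k+1) := by
      rw [my_integral_congr_Ioc (v := fun s => (stepFn M sigv lamv s)^2 / sigb (k+1)) hle2 ?_]
      · rw [hCvdef (k+1), ← intervalIntegral.integral_div]
      · intro s hs1 hs2
        rw [min_eq_right hs1.le, hsigval (k+1) (Finset.mem_Icc.mpr ⟨by omega, by omega⟩) (lamb (k+1)) (by simpa using hlt') le_rfl]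
    rw [hγvl (k+1) (by omega), ← hsplit, hL, hR]
  have hγvm : γv m = gammaStar M sigv lamv sigbar := by
    rw [hγvl m (by omega)]
    simp only [gammaStar]
    apply my_integral_congr_Ioc (by norm_num : (0:ℝ) ≤ 1)
    intro s hs1 hs2
    rw [hbm, min_eq_left hs2]
  -- positivity
  have hPpos : ∀ k, k < m → 0 < P k := by
    intro k hk
    have hlt' : lamb k < lamb (k+1) := hbltl k hk
    have h := my_integral_ge_const (c := smin^2) hlt'.le (hF_int _ _) ?_
    · rw [← hPdef] at h
      have : 0 < smin^2 * (lamb (k+1) - lamb k) := by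
        apply mul_pos (pow_pos hsmin_pos 2); linarith
      linarith
    · intro s hs1 hs2
      exact hF_lb s (lt_of_le_of_lt (hlvb0 k (by omega)) hs1) (le_trans hs2 (hlvb1 (k+1) (by omega)))
  have hCvpos : ∀ k, k < m → 0 < Cv k := by
    intro k hk
    have hk1 : lamb k < 1 := lt_of_lt_of_le (hbltl k hk) (hlvb1 (k+1) (by omega))
    have h := my_integral_ge_const (c := smin^2) hk1.le (hF_int _ _) ?_
    · rw [← hCvdef] at h
      have : 0 < smin^2 * (1 - lamb k) := by
        apply mul_pos (pow_pos hsmin_pos 2); linarith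
      linarith
    · intro s hs1 hs2
      exact hF_lb s (lt_of_le_of_lt (hlvb0 k (by omega)) hs1) hs2
  -- Jsig2 basics and the concave hull
  have hJdef : ∀ t : ℝ, Jsig2 M sigv lamv t = ∫ s in (0:ℝ)..t, (stepFn M sigv lamv s)^2 :=
    fun t => by simp only [Jsig2, Jint]
  have hJmono : ∀ t, 0 ≤ t → t ≤ 1 → Jsig2 M sigv lamv t ≤ Jsig2 M sigv lamv 1 := by
    intro t h0 h1
    rw [hJdef t, hJdef 1,
      ← intervalIntegral.integral_add_adjacent_intervals (hF_int 0 t) (hF_int t 1)]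
    have : 0 ≤ ∫ s in t..(1:ℝ), (stepFn M sigv lamv s)^2 :=
      intervalIntegral.integral_nonneg h1 (fun u _ => sq_nonneg _)
    linarith
  have hull_ge : ∀ t, 0 ≤ t → t ≤ 1 → Jsig2 M sigv lamv t ≤ concaveHull (Jsig2 M sigv lamv) t := by
    intro t h0 h1
    unfold concaveHull
    apply le_csInf
    · exact ⟨Jsig2 M sigv lamv 1, fun _ => Jsig2 M sigv lamv 1,
        concaveOn_const _ (convex_Icc _ _), fun u hu => hJmono u hu.1 hu.2, rfl⟩
    · rintro y ⟨gg, hgc, hgd, rfl⟩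
      exact hgd t ⟨h0, h1⟩
  have hHH : ∀ t, 0 < t → t ≤ 1 →
      concaveHull (Jsig2 M sigv lamv) t = ∫ r in (0:ℝ)..t, Gg r := by
    intro t h0 h1
    rw [hhull t h0 h1]
    exact my_integral_congr_Ioc h0.le (fun r h0r h1r => hsigbar2 r h0r (le_trans h1r h1))
  -- the concavification touches the speed function at the effective scales
  have htouch : ∀ j, 1 ≤ j → j < m → (∫ r in (0:ℝ)..lamb j, Gg r) = Jsig2 M sigv lamv (lamb j) := by
    intro j hj1 hjm
    have hp0 : 0 < lamb j := by
      have h1 := hbmono 0 (j-1) (by omega) (by omega)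
      have h2 : lamb (j-1) < lamb j := by
        have := hbltl (j-1) (by omega)
        rwa [Nat.sub_add_cancel hj1] at this
      rw [hb0] at h1; linarith
    have hp1 : lamb j ≤ 1 := hlvb1 j (by omega)
    have hge : Jsig2 M sigv lamv (lamb j) ≤ ∫ r in (0:ℝ)..lamb j, Gg r := by
      rw [← hHH (lamb j) hp0 hp1]
      exact hull_ge (lamb j) hp0.le hp1
    by_contra hne
    have hlt : Jsig2 M sigv lamv (lamb j) < ∫ r in (0:ℝ)..lamb j, Gg r :=
      lt_of_le_of_ne hge (fun h => hne h.symm)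
    obtain ⟨p, hpdef⟩ : ∃ p : ℝ, p = lamb j := ⟨_, rfl⟩
    obtain ⟨HHp, hHHpdef⟩ : ∃ x : ℝ, x = ∫ r in (0:ℝ)..lamb j, Gg r := ⟨_, rfl⟩
    obtain ⟨Jp, hJpdef⟩ : ∃ x : ℝ, x = Jsig2 M sigv lamv (lamb j) := ⟨_, rfl⟩
    obtain ⟨D, hDdef⟩ : ∃ x : ℝ, x = HHp - Jp := ⟨_, rfl⟩
    have hD0 : 0 < D := by rw [hDdef, hHHpdef, hJpdef]; linarith
    obtain ⟨b1, hb1def⟩ : ∃ x : ℝ, x = sigb j ^ 2 := ⟨_, rfl⟩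
    obtain ⟨b2, hb2def⟩ : ∃ x : ℝ, x = sigb (j+1) ^ 2 := ⟨_, rfl⟩
    have hb1pos : 0 < b1 := hb1def ▸ pow_pos (hbposl j hj1 (by omega)) 2
    have hb2pos : 0 < b2 := hb2def ▸ pow_pos (hbposl (j+1) (by omega) (by omega)) 2
    have hb21 : b2 < b1 := by
      rw [hb1def, hb2def]
      have h := hbdec j hj1 hjm
      have h2 := hbposl (j+1) (by omega) (by omega)
      exact pow_lt_pow_left₀ h h2.le two_ne_zero
    obtain ⟨K, hKdef⟩ : ∃ x : ℝ, x = (b1 + b2)/2 := ⟨_, rfl⟩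
    obtain ⟨kap, hkapdef⟩ : ∃ x : ℝ, x = (b1 - b2)/2 := ⟨_, rfl⟩
    have hkap0 : 0 < kap := by rw [hkapdef]; linarith
    have hK0 : 0 < K := by rw [hKdef]; linarith
    obtain ⟨L, hLdef⟩ : ∃ x : ℝ, x = smax^2 := ⟨_, rfl⟩
    have hL0 : 0 ≤ L := hLdef ▸ sq_nonneg _
    obtain ⟨del, hdeldef⟩ : ∃ x : ℝ, x = D / (kap + K + L + 1) := ⟨_, rfl⟩
    have hdel0 : 0 < del := by rw [hdeldef]; exact div_pos hD0 (by linarith)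
    obtain ⟨eps, hepsdef⟩ : ∃ x : ℝ, x = del * (K + L + 1) := ⟨_, rfl⟩
    have heps0 : 0 < eps := by rw [hepsdef]; exact mul_pos hdel0 (by linarith)
    have hDdel : D = del * (kap + K + L + 1) := by
      rw [hdeldef]
      field_simp
    have hepsD : eps < D := by
      rw [hDdel, hepsdef]
      linarith [mul_pos hdel0 hkap0]
    have hHHadd : ∀ t : ℝ, (∫ r in (0:ℝ)..t, Gg r) = HHp + ∫ r in p..t, Gg r := by
      intro t
      rw [hHHpdef, hpdef,
        intervalIntegral.integral_add_adjacent_intervals (hGg_int 0 (lamb j)) (hGg_int (lamb j) t)]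
    have hIntL : ∀ t, 0 ≤ t → t ≤ p → b1 * (p - t) ≤ ∫ r in t..p, Gg r := by
      intro t h0 ht
      apply my_integral_ge_const ht (hGg_int t p)
      intro r hr1 hr2
      have hr0 : 0 < r := lt_of_le_of_lt h0 hr1
      have hr1' : r ≤ 1 := le_trans hr2 (hpdef ▸ hp1)
      obtain ⟨l, hl1, hlm, hq1, hq2⟩ := my_exists_piece m lamb hb0 hbm hblt hr0 hr1'
      have hlj : l ≤ j := by
        by_contra hc
        have hcc : lamb j ≤ lamb (l-1) := hbmono j (l-1) (by omega) (by omega)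
        rw [← hpdef] at hcc
        linarith
      rw [hGg_val l hl1 hlm r hq1 hq2, hb1def]
      exact pow_le_pow_left₀ (hbposl j hj1 (by omega)).le (hbanti l j hl1 hlj (by omega)) 2
    have hIntR : ∀ t, p ≤ t → t ≤ 1 → (∫ r in p..t, Gg r) ≤ b2 * (t - p) := by
      intro t ht h1
      apply my_integral_le_const ht (hGg_int p t)
      intro r hr1 hr2
      have hr0 : 0 < r := lt_trans (show (0:ℝ) < p by rw [hpdef]; exact hp0) hr1
      obtain ⟨l, hl1, hlm, hq1, hq2⟩ := my_exists_piece m lamb hb0 hbm hblt hr0 (le_trans hr2 h1)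
      have hlj : j + 1 ≤ l := by
        by_contra hc
        have hcc : lamb l ≤ lamb j := hbmono l j (by omega) (by omega)
        rw [← hpdef] at hcc
        linarith
      rw [hGg_val l hl1 hlm r hq1 hq2, hb2def]
      exact pow_le_pow_left₀ (hbposl l hl1 hlm).le (hbanti (j+1) l (by omega) hlj hlm) 2
    have hA1dom : ∀ t, 0 ≤ t → t ≤ 1 → (∫ r in (0:ℝ)..t, Gg r) ≤ HHp + b1 * (t - p) := by
      intro t h0 h1
      rcases le_total t p with hc | hc
      · have h2 := hIntL t h0 hc
        have h3 : (∫ r in p..t, Gg r) = -∫ r in t..p, Gg r := intervalIntegral.integral_symm t p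
        rw [hHHadd t, h3]
        linarith
      · have h2 := hIntR t hc h1
        rw [hHHadd t]
        have h4 : b2 * (t - p) ≤ b1 * (t - p) :=
          mul_le_mul_of_nonneg_right hb21.le (sub_nonneg.mpr hc)
        linarith
    have hA2dom : ∀ t, 0 ≤ t → t ≤ 1 → (∫ r in (0:ℝ)..t, Gg r) ≤ HHp + b2 * (t - p) := by
      intro t h0 h1
      rcases le_total t p with hc | hc
      · have h2 := hIntL t h0 hc
        have h3 : (∫ r in p..t, Gg r) = -∫ r in t..p, Gg r := intervalIntegral.integral_symm t p
        rw [hHHadd t, h3]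
        have h4 : b2 * (p - t) ≤ b1 * (p - t) :=
          mul_le_mul_of_nonneg_right hb21.le (sub_nonneg.mpr hc)
        linarith
      · have h2 := hIntR t hc h1
        rw [hHHadd t]
        linarith
    have hJH : ∀ t, 0 ≤ t → t ≤ 1 → Jsig2 M sigv lamv t ≤ ∫ r in (0:ℝ)..t, Gg r := by
      intro t h0 h1
      rcases eq_or_lt_of_le h0 with hc | hc
      · rw [← hc, hJdef]
        simp
      · rw [← hHH t hc h1]
        exact hull_ge t h0 h1
    have hLip : ∀ t : ℝ, |Jsig2 M sigv lamv t - Jp| ≤ L * |t - p| := by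
      intro t
      have hsplit := intervalIntegral.integral_add_adjacent_intervals (hF_int 0 p) (hF_int p t)
      have he : Jsig2 M sigv lamv t - Jp = ∫ s in p..t, (stepFn M sigv lamv s)^2 := by
        rw [hJdef t, hJpdef, hJdef (lamb j), ← hpdef, ← hsplit]
        ring
      rw [he]
      have h2 := intervalIntegral.norm_integral_le_of_norm_le_const (C := L)
        (f := fun s => (stepFn M sigv lamv s)^2) (a := p) (b := t)
        (fun x _ => by rw [Real.norm_eq_abs, hLdef]; exact hF_abs x)
      simpa [Real.norm_eq_abs] using h2
    have hBdom : ∀ t, 0 ≤ t → t ≤ 1 → Jsig2 M sigv lamv t ≤ Jp + eps + K * (t - p) := by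
      intro t h0 h1
      rcases le_total t (p - del) with hc | hc
      · have h2 : Jsig2 M sigv lamv t ≤ HHp + b1 * (t - p) :=
          le_trans (hJH t h0 h1) (hA1dom t h0 h1)
        have hKeq : K * (t - p) = b1 * (t - p) + kap * (p - t) := by
          rw [hKdef, hkapdef]; ring
        have h3 : kap * del ≤ kap * (p - t) :=
          mul_le_mul_of_nonneg_left (by linarith) hkap0.le
        have h4 : D - eps = kap * del := by rw [hDdel, hepsdef]; ring
        have h5 : HHp = Jp + D := by rw [hDdef]; ring
        linarith
      · rcases le_total (p + del) t with hc2 | hc2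
        · have h2 : Jsig2 M sigv lamv t ≤ HHp + b2 * (t - p) :=
            le_trans (hJH t h0 h1) (hA2dom t h0 h1)
          have hKeq : K * (t - p) = b2 * (t - p) + kap * (t - p) := by
            rw [hKdef, hkapdef]; ring
          have h3 : kap * del ≤ kap * (t - p) :=
            mul_le_mul_of_nonneg_left (by linarith) hkap0.le
          have h4 : D - eps = kap * del := by rw [hDdel, hepsdef]; ring
          have h5 : HHp = Jp + D := by rw [hDdef]; ring
          linarith
        · have habs : |t - p| ≤ del := abs_le.mpr ⟨by linarith, by linarith⟩
          have h2 := hLip t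
          have h8 : K * (-del) ≤ K * (t - p) :=
            mul_le_mul_of_nonneg_left (abs_le.mp habs).1 hK0.le
          have h6 : Jsig2 M sigv lamv t - Jp ≤ L * del := by
            have h9 : L * |t - p| ≤ L * del := mul_le_mul_of_nonneg_left habs hL0
            linarith [le_trans (le_abs_self _) h2]
          have h7 : eps = del * K + del * L + del := by rw [hepsdef]; ring
          linarith [hdel0]
    have hgconc : ConcaveOn ℝ (Set.Icc (0:ℝ) 1)
        (fun t => min (min (HHp + b1 * (t - p)) (HHp + b2 * (t - p))) (Jp + eps + K * (t - p))) := by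
      have c1 : ConcaveOn ℝ (Set.Icc (0:ℝ) 1) (fun t : ℝ => HHp + b1 * (t - p)) := by
        have hc := my_concaveOn_affine (HHp - b1 * p) b1
        convert hc using 1
        funext t; ring
      have c2 : ConcaveOn ℝ (Set.Icc (0:ℝ) 1) (fun t : ℝ => HHp + b2 * (t - p)) := by
        have hc := my_concaveOn_affine (HHp - b2 * p) b2
        convert hc using 1
        funext t; ring
      have c3 : ConcaveOn ℝ (Set.Icc (0:ℝ) 1) (fun t : ℝ => Jp + eps + K * (t - p)) := by
        have hc := my_concaveOn_affine (Jp + eps - K * p) K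
        convert hc using 1
        funext t; ring
      exact my_concaveOn_min (my_concaveOn_min c1 c2) c3
    have hgdom : ∀ t ∈ Set.Icc (0:ℝ) 1, Jsig2 M sigv lamv t ≤
        min (min (HHp + b1 * (t - p)) (HHp + b2 * (t - p))) (Jp + eps + K * (t - p)) := by
      rintro t ⟨h0, h1⟩
      exact le_min (le_min (le_trans (hJH t h0 h1) (hA1dom t h0 h1))
        (le_trans (hJH t h0 h1) (hA2dom t h0 h1))) (hBdom t h0 h1)
    have hle2 : concaveHull (Jsig2 M sigv lamv) p ≤
        min (min (HHp + b1 * (p - p)) (HHp + b2 * (p - p))) (Jp + eps + K * (p - p)) := by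
      unfold concaveHull
      apply csInf_le
      · refine ⟨Jsig2 M sigv lamv p, ?_⟩
        rintro y ⟨gg, hgc, hgd, rfl⟩
        exact hgd p ⟨hpdef ▸ hp0.le, hpdef ▸ hp1⟩
      · exact ⟨_, hgconc, hgdom, rfl⟩
    have heq : concaveHull (Jsig2 M sigv lamv) p = HHp := by
      rw [hpdef, hHH (lamb j) hp0 hp1, hHHpdef]
    have hfin : min (min (HHp + b1 * (p - p)) (HHp + b2 * (p - p))) (Jp + eps + K * (p - p))
        ≤ Jp + eps := by
      refine le_trans (min_le_right _ _) (le_of_eq ?_)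
      ring
    rw [heq] at hle2
    have hcon1 : HHp ≤ Jp + eps := le_trans hle2 hfin
    have hcon2 : HHp = Jp + D := by rw [hDdef]; ring
    linarith
  -- the touching identity gives the piece values of the concave envelope
  have hP_eq : ∀ k, k + 1 < m → P k = sigb (k+1)^2 * (lamb (k+1) - lamb k) := by
    intro k hk
    have hle : lamb k ≤ lamb (k+1) := (hbltl k (by omega)).le
    have hGgpiece : (∫ r in lamb k..lamb (k+1), Gg r) = sigb (k+1)^2 * (lamb (k+1) - lamb k) :=
      my_integral_step hle
        (fun r h1 h2 => hGg_val (k+1) (by omega) (by omega) r (by simpa using h1) h2)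
    have hsplitG := intervalIntegral.integral_add_adjacent_intervals
      (hGg_int 0 (lamb k)) (hGg_int (lamb k) (lamb (k+1)))
    have hsplitF := intervalIntegral.integral_add_adjacent_intervals
      (hF_int 0 (lamb k)) (hF_int (lamb k) (lamb (k+1)))
    have ht2 : (∫ r in (0:ℝ)..lamb (k+1), Gg r) = Jsig2 M sigv lamv (lamb (k+1)) :=
      htouch (k+1) (by omega) (by omega)
    have ht1 : (∫ r in (0:ℝ)..lamb k, Gg r) = Jsig2 M sigv lamv (lamb k) := by
      rcases Nat.eq_zero_or_pos k with rfl | hk0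
      · rw [hb0, hJdef]
        simp
      · exact htouch k (by omega) (by omega)
    rw [hPdef]
    linarith [hsplitG, hsplitF, ht2, ht1, hGgpiece, hJdef (lamb (k+1)), hJdef (lamb k)]
  -- combined relations
  have hγA : ∀ k, k < m → γv (k+1) = Av k + Cv k / sigb (k+1) := by
    intro k hk
    have h1 := hγv_rec k hk
    have h2 := hAv_rec k hk
    have h3 := hCv_rec k hk
    have hb : sigb (k+1) ≠ 0 := (hbposl (k+1) (by omega) (by omega)).ne'
    rw [h1, h2, h3]
    field_simp
    ring
  have hγsucc : ∀ i, i < m → γv i < γv (i+1) := by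
    intro i hi
    rcases Nat.eq_zero_or_pos i with rfl | hi0
    · rw [hγv0, hγA 0 hi, hAv0]
      have := div_pos (hCvpos 0 hi) (hbposl 1 (by omega) (by omega))
      linarith
    · have e1 : γv i = Av i + Cv i / sigb i := by
        have := hγv_rec (i-1) (by omega)
        rwa [Nat.sub_add_cancel hi0] at this
      have e2 := hγA i hi
      have hblt2 : sigb (i+1) < sigb i := hbdec i hi0 hi
      have h4 := hCvpos i hi
      have h5 := hbposl (i+1) (by omega) (by omega)
      rw [e1, e2]
      have h6 : Cv i / sigb i < Cv i / sigb (i+1) := div_lt_div_of_pos_left h4 h5 hblt2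
      linarith
  have hγmono' : ∀ i j, i ≤ j → j ≤ m → γv i ≤ γv j := my_mono_of_lt m γv hγsucc
  have hγnonneg : ∀ i, i ≤ m → 0 ≤ γv i := by
    intro i hi
    have := hγmono' 0 i (Nat.zero_le _) hi
    rwa [hγv0] at this
  have hsqdiv : ∀ C b : ℝ, C ≠ 0 → b ≠ 0 → (C/b)^2/C = C/b^2 := by
    intro C b hC hb
    field_simp
  have hQder : ∀ k, k + 1 < m →
      (γv (k+1) - Av k) / Cv k = (γv (k+1) - Av (k+1)) / Cv (k+1) := by
    intro k hk
    have e1 := hγA k (by omega)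
    have e2 := hγv_rec k (by omega)
    have h4 := (hCvpos k (by omega)).ne'
    have h5 := (hCvpos (k+1) hk).ne'
    have hb := (hbposl (k+1) (by omega) (by omega)).ne'
    have l1 : γv (k+1) - Av k = Cv k / sigb (k+1) := by rw [e1]; ring
    have l2 : γv (k+1) - Av (k+1) = Cv (k+1) / sigb (k+1) := by rw [e2]; ring
    rw [l1, l2]
    field_simp
  have hQcont : ∀ k, k + 1 < m →
      (1 - lamb k) - (γv (k+1) - Av k)^2 / Cv k
        = (1 - lamb (k+1)) - (γv (k+1) - Av (k+1))^2 / Cv (k+1) := by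
    intro k hk
    have e1 := hγA k (by omega)
    have e2 := hγv_rec k (by omega)
    have e3 := hCv_rec k (by omega)
    have e4 := hP_eq k hk
    have h4 := (hCvpos k (by omega)).ne'
    have h5 := (hCvpos (k+1) hk).ne'
    have hb := (hbposl (k+1) (by omega) (by omega)).ne'
    have l1 : γv (k+1) - Av k = Cv k / sigb (k+1) := by rw [e1]; ring
    have l2 : γv (k+1) - Av (k+1) = Cv (k+1) / sigb (k+1) := by rw [e2]; ring
    rw [l1, l2, hsqdiv _ _ h4 hb, hsqdiv _ _ h5 hb, e3, e4]
    field_simp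
    ring
  -- the entropy function on the pieces
  have hEohalf : ∀ k, k < m → ∀ y, γv k < y → y ≤ γv (k+1) →
      EntE y = (1 - lamb k) - (y - Av k)^2 / Cv k := by
    intro k hk y h1 h2
    have h3 := hEform (k+1) (Finset.mem_Icc.mpr ⟨by omega, by omega⟩) y
      (by simpa using h1) h2
    simp only [Nat.add_sub_cancel, Jint2] at h3
    rw [← hAvdef k, ← hCvdef k] at h3
    exact h3
  have hEpiece : ∀ k, k < m → ∀ x ∈ Set.Icc (γv k) (γv (k+1)),
      EntE x = (1 - lamb k) - (x - Av k)^2 / Cv k := by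
    intro k hk x hx
    rcases eq_or_lt_of_le hx.1 with hc | hc
    · rcases Nat.eq_zero_or_pos k with rfl | hk0
      · have hx0 : x = 0 := by rw [← hc, hγv0]
        rw [hx0, hE0, hAv0, hb0]
        norm_num
      · obtain ⟨k', rfl⟩ : ∃ k', k = k' + 1 := ⟨k - 1, by omega⟩
        have h1 := hγsucc k' (by omega)
        have h2 := hEohalf k' (by omega) x (by rw [← hc]; exact h1) (le_of_eq hc.symm)
        rw [h2, ← hc]
        exact hQcont k' hk
    · exact hEohalf k hk x hc hx.2
  -- the candidate derivative
  obtain ⟨E', hE'def⟩ : ∃ E' : ℝ → ℝ, E' = fun x => ∑ l ∈ Finset.Icc 1 m,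
      if γv (l-1) < x ∧ x ≤ γv l then (-2) * (x - Av (l-1)) / Cv (l-1) else 0 := ⟨_, rfl⟩
  have hE'ohalf : ∀ k, k < m → ∀ y, γv k < y → y ≤ γv (k+1) →
      E' y = (-2) * (y - Av k) / Cv k := by
    intro k hk y h1 h2
    rw [hE'def]
    have h3 := my_sum_ite_piece m γv (fun l => (-2) * (y - Av (l-1)) / Cv (l-1)) hγmono'
      (i := k+1) (by omega) (by omega) (by simpa using h1) h2
    simpa using h3
  have hE'piece : ∀ k, k < m → ∀ x ∈ Set.Icc (γv k) (γv (k+1)),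
      E' x = (-2) * (x - Av k) / Cv k := by
    intro k hk x hx
    rcases eq_or_lt_of_le hx.1 with hc | hc
    · rcases Nat.eq_zero_or_pos k with rfl | hk0
      · have hx0 : x = 0 := by rw [← hc, hγv0]
        rw [hE'def]
        simp only
        rw [Finset.sum_eq_zero, hx0, hAv0]
        · norm_num
        · intro l hl
          rw [Finset.mem_Icc] at hl
          apply if_neg
          rintro ⟨hc1, -⟩
          have h4 : 0 ≤ γv (l-1) := hγnonneg (l-1) (by omega)
          rw [hx0] at hc1
          linarith
      · obtain ⟨k', rfl⟩ : ∃ k', k = k' + 1 := ⟨k - 1, by omega⟩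
        have h1 := hγsucc k' (by omega)
        have h2 := hE'ohalf k' (by omega) x (by rw [← hc]; exact h1) (le_of_eq hc.symm)
        rw [h2, ← hc, mul_div_assoc, mul_div_assoc, hQder k' hk]
    · exact hE'ohalf k hk x hc hx.2
  -- differentiability and continuity on each closed piece
  have hderiv_piece : ∀ k, k < m → ∀ x ∈ Set.Icc (γv k) (γv (k+1)),
      HasDerivWithinAt EntE (E' x) (Set.Icc (γv k) (γv (k+1))) x := by
    intro k hk x hx
    rw [hE'piece k hk x hx]
    have hq : HasDerivAt (fun y => (1 - lamb k) - (y - Av k)^2 / Cv k)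
        ((-2) * (x - Av k) / Cv k) x := by
      have h1 : HasDerivAt (fun y : ℝ => (y - Av k)^2) (2*(x - Av k)) x := by
        have := ((hasDerivAt_id x).sub_const (Av k)).fun_pow 2
        simpa using this
      have h2 := (h1.div_const (Cv k)).const_sub (1 - lamb k)
      rw [show (-2) * (x - Av k) / Cv k = -(2 * (x - Av k) / Cv k) by ring]
      exact h2
    exact (hq.hasDerivWithinAt).congr (fun y hy => hEpiece k hk y hy) (hEpiece k hk x hx)
  have hcont_piece : ∀ k, k < m → ∀ x ∈ Set.Icc (γv k) (γv (k+1)),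
      ContinuousWithinAt E' (Set.Icc (γv k) (γv (k+1))) x := by
    intro k hk x hx
    have hcc : Continuous (fun y : ℝ => (-2) * (y - Av k) / Cv k) := by
      fun_prop
    exact (hcc.continuousWithinAt).congr (fun y hy => hE'piece k hk y hy) (hE'piece k hk x hx)
  -- conclusion
  have hIcc : Set.Icc (0:ℝ) (gammaStar M sigv lamv sigbar) = Set.Icc (γv 0) (γv m) := by
    rw [hγv0, hγvm]
  refine ⟨E', ?_, ?_⟩
  · intro γ hγ
    rw [hIcc] at hγ ⊢
    exact my_glue_deriv EntE E' γv m hm1 hγsucc hderiv_piece γ hγ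
  · intro x hx
    rw [hIcc] at hx ⊢
    exact my_glue_cont E' γv m hm1 hγsucc hcont_piece x hx
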